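/- Fix i and let ĥ_{i,j} ∈ ℂᴺ (j = 1,…,K), B_{i,j} be N×N Hermitian positive semidefinite matrices, W_1, …, W_K be N×N Hermitian positive semidefinite matrices, and let ζ ∈ (0,1], ρ ∈ [0,1], η > 0, σ² > 0. Then the worst-case energy-harvesting constraint 'ζ(1−ρ)(Σ_{j=1}^{K} (ĥ_{i,j}+e_{i,j})ᴴ W_j (ĥ_{i,j}+e_{i,j}) + σ²) ≥ η for all (e_{i,1},…,e_{i,K}) with e_{i,j}ᴴ B_{i,j} e_{i,j} ≤ 1 for every j' holds if and only if there exist μ_{i,j} ≥ 0 and t_{i,j} ≥ 0 (j = 1,…,K) such that: (a) the 2×2 real symmetric matrix [[ζ(1−ρ), √η], [√η, Σ_{j=1}^{K} t_{i,j} + σ²]] is positive semidefinite, and (b) for each j the (N+1)×(N+1) Hermitian block matrix [[W_j + μ_{i,j}B_{i,j}, W_jĥ_{i,j}], [ĥ_{i,j}ᴴW_j, ĥ_{i,j}ᴴW_jĥ_{i,j} − t_{i,j} − μ_{i,j}]] is positive semidefinite. -/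

import Mathlib

open Matrix ComplexOrder
set_option linter.unusedSectionVars false

section GEN
variable {n : Type*} [Fintype n]



lemma quad_expand (M : Matrix n n ℂ) (x y : n → ℂ) :
    star (x + y) ⬝ᵥ M *ᵥ (x + y) =
      star x ⬝ᵥ M *ᵥ x + star x ⬝ᵥ M *ᵥ y + star y ⬝ᵥ M *ᵥ x + star y ⬝ᵥ M *ᵥ y := by
  simp [star_add, add_dotProduct, dotProduct_add, Matrix.mulVec_add]
  ring

lemma quad_smul (M : Matrix n n ℂ) (a b : ℂ) (x y : n → ℂ) :
    star (a • x) ⬝ᵥ M *ᵥ (b • y) = star a * b * (star x ⬝ᵥ M *ᵥ y) := by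
  simp [star_smul, smul_dotProduct, dotProduct_smul, Matrix.mulVec_smul, smul_eq_mul]
  ring

lemma quad_star (M : Matrix n n ℂ) (hM : M.IsHermitian) (x y : n → ℂ) :
    star (star x ⬝ᵥ M *ᵥ y) = star y ⬝ᵥ M *ᵥ x := by
  calc star (star x ⬝ᵥ M *ᵥ y) = star (star x) ⬝ᵥ star (M *ᵥ y) := by
        rw [← Matrix.star_dotProduct_star, star_star, dotProduct_comm]
    _ = x ⬝ᵥ (star y ᵥ* Mᴴ) := by rw [star_star, Matrix.star_mulVec]
    _ = x ⬝ᵥ (star y ᵥ* M) := by rw [hM.eq]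
    _ = star y ⬝ᵥ M *ᵥ x := by rw [Matrix.dotProduct_mulVec, dotProduct_comm]

lemma psd_re_nonneg {M : Matrix n n ℂ} (hM : M.PosSemidef) (x : n → ℂ) :
    0 ≤ (star x ⬝ᵥ M *ᵥ x).re := by
  have := hM.dotProduct_mulVec_nonneg x
  rw [Complex.le_def] at this
  simpa using this.1

lemma quad_convex {M : Matrix n n ℂ} (hM : M.PosSemidef) (a b : ℝ)
    (ha : 0 ≤ a) (hb : 0 ≤ b) (hab : a + b = 1) (x y : n → ℂ) :
    (star ((a:ℂ) • x + (b:ℂ) • y) ⬝ᵥ M *ᵥ ((a:ℂ) • x + (b:ℂ) • y)).re ≤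
      a * (star x ⬝ᵥ M *ᵥ x).re + b * (star y ⬝ᵥ M *ᵥ y).re := by
  set Qx := star x ⬝ᵥ M *ᵥ x with hQx
  set Qy := star y ⬝ᵥ M *ᵥ y with hQy
  set Cxy := star x ⬝ᵥ M *ᵥ y with hCxy
  set Cyx := star y ⬝ᵥ M *ᵥ x with hCyx
  have h1 : star ((a:ℂ) • x + (b:ℂ) • y) ⬝ᵥ M *ᵥ ((a:ℂ) • x + (b:ℂ) • y)
      = (a:ℂ)^2 * Qx + (b:ℂ)^2 * Qy + (a:ℂ)*(b:ℂ)*(Cxy + Cyx) := by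
    rw [quad_expand, quad_smul, quad_smul, quad_smul, quad_smul]
    simp only [Complex.star_def, Complex.conj_ofReal]
    ring
  have h2 : star (x - y) ⬝ᵥ M *ᵥ (x - y) = Qx - Cxy - Cyx + Qy := by
    have := quad_expand M x (-y)
    simp only [← sub_eq_add_neg, star_neg, neg_dotProduct, dotProduct_neg,
      Matrix.mulVec_neg, neg_neg] at this
    rw [this, ← hQx, ← hQy, ← hCxy, ← hCyx]
  have h3 : 0 ≤ Qx.re - Cxy.re - Cyx.re + Qy.re := by
    have := psd_re_nonneg hM (x - y)
    rw [h2] at this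
    simpa using this
  have h4 : (((a:ℂ)^2 * Qx + (b:ℂ)^2 * Qy + (a:ℂ)*(b:ℂ)*(Cxy + Cyx))).re
      = a^2 * Qx.re + b^2 * Qy.re + a*b*(Cxy.re + Cyx.re) := by
    simp only [Complex.add_re, Complex.mul_re, ← Complex.ofReal_pow,
      ← Complex.ofReal_mul, Complex.ofReal_re, Complex.ofReal_im]
    ring
  rw [h1, h4]
  have hb' : b = 1 - a := by linarith
  have key : a * Qx.re + b * Qy.re -
      (a^2*Qx.re + b^2*Qy.re + a*b*(Cxy.re+Cyx.re)) =
      a*b*(Qx.re - Cxy.re - Cyx.re + Qy.re) := by rw [hb']; ring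
  nlinarith [mul_nonneg (mul_nonneg ha hb) h3]



lemma dual_attain (f g : (n → ℂ) → ℝ)
    (hconv : ∀ (a b : ℝ), 0 ≤ a → 0 ≤ b → a + b = 1 → ∀ x y,
      f ((a:ℂ) • x + (b:ℂ) • y) ≤ a * f x + b * f y ∧
      g ((a:ℂ) • x + (b:ℂ) • y) ≤ a * g x + b * g y)
    (hf0 : ∀ e, 0 ≤ f e) (hg0 : g 0 = -1) :
    ∃ μ : ℝ, 0 ≤ μ ∧ ∀ e, sInf (f '' {e | g e ≤ 0}) ≤ f e + μ * g e := by
  set m := sInf (f '' {e | g e ≤ 0}) with hm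
  have hfeas : (0 : n → ℂ) ∈ {e | g e ≤ 0} := by simp [hg0]
  have hbdd : BddBelow (f '' {e | g e ≤ 0}) := ⟨0, by rintro y ⟨e, _, rfl⟩; exact hf0 e⟩
  have hm_le : ∀ e, g e ≤ 0 → m ≤ f e := fun e he => csInf_le hbdd ⟨e, he, rfl⟩
  -- the sets
  set O : Set (ℝ × ℝ) := Set.Iio 0 ×ˢ Set.Iio m with hO
  set A : Set (ℝ × ℝ) := {p | ∃ e, g e ≤ p.1 ∧ f e ≤ p.2} with hA
  have hOconv : Convex ℝ O := (convex_Iio 0).prod (convex_Iio m)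
  have hOopen : IsOpen O := (isOpen_Iio).prod (isOpen_Iio)
  have hAconv : Convex ℝ A := by
    rintro p ⟨e1, hg1, hf1⟩ q ⟨e2, hg2, hf2⟩ a b ha hb hab
    refine ⟨(a:ℂ) • e1 + (b:ℂ) • e2, ?_, ?_⟩
    · calc g ((a:ℂ) • e1 + (b:ℂ) • e2) ≤ a * g e1 + b * g e2 :=
            (hconv a b ha hb hab e1 e2).2
        _ ≤ a * p.1 + b * q.1 := by
            have := mul_le_mul_of_nonneg_left hg1 ha
            have := mul_le_mul_of_nonneg_left hg2 hb
            simpa [Prod.smul_def, smul_eq_mul] using add_le_add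
              (mul_le_mul_of_nonneg_left hg1 ha) (mul_le_mul_of_nonneg_left hg2 hb)
        _ = (a • p + b • q).1 := by simp [Prod.smul_def, smul_eq_mul]
    · calc f ((a:ℂ) • e1 + (b:ℂ) • e2) ≤ a * f e1 + b * f e2 :=
            (hconv a b ha hb hab e1 e2).1
        _ ≤ a * p.2 + b * q.2 := add_le_add
              (mul_le_mul_of_nonneg_left hf1 ha) (mul_le_mul_of_nonneg_left hf2 hb)
        _ = (a • p + b • q).2 := by simp [Prod.smul_def, smul_eq_mul]
  have hdisj : Disjoint O A := by
    rw [Set.disjoint_left]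
    rintro p hpO ⟨e, hge, hfe⟩
    obtain ⟨hp1, hp2⟩ := hpO
    have h1 : g e ≤ 0 := le_of_lt (lt_of_le_of_lt hge hp1)
    have := hm_le e h1
    have : m ≤ p.2 := le_trans this hfe
    exact absurd hp2 (not_lt.2 this)
  obtain ⟨φ, u, hsep1, hsep2⟩ := geometric_hahn_banach_open hOconv hOopen hAconv hdisj
  set α := φ (1, 0) with hα
  set β := φ (0, 1) with hβ
  have hφ : ∀ p : ℝ × ℝ, φ p = p.1 * α + p.2 * β := by
    intro p
    have hp : p = p.1 • ((1:ℝ), (0:ℝ)) + p.2 • ((0:ℝ), (1:ℝ)) := by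
      ext <;> simp
    rw [hp, map_add, _root_.map_smul, _root_.map_smul]
    simp [smul_eq_mul, hα, hβ]
  have hAe : ∀ e, u ≤ g e * α + f e * β := by
    intro e
    have := hsep2 (g e, f e) ⟨e, le_refl _, le_refl _⟩
    rwa [hφ] at this
  have hOe : ∀ x y : ℝ, x < 0 → y < m → x * α + y * β < u := by
    intro x y hx hy
    have := hsep1 (x, y) ⟨hx, hy⟩
    rwa [hφ] at this
  have hβ0 : 0 ≤ β := by
    by_contra hneg
    push_neg at hneg
    set c := max 1 ((u + α - m * β + 1) / (-β)) with hc
    have hc1 : (1:ℝ) ≤ c := le_max_left _ _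
    have h := hOe (-1) (m - c) (by norm_num) (by linarith)
    have hcb : (u + α - m * β + 1) ≤ c * (-β) := by
      rw [← div_le_iff₀ (by linarith : (0:ℝ) < -β)]
      exact le_max_right _ _
    nlinarith
  have hα0 : 0 ≤ α := by
    by_contra hneg
    push_neg at hneg
    set c := max 1 ((u - (m-1) * β + 1) / (-α)) with hc
    have hc1 : (1:ℝ) ≤ c := le_max_left _ _
    have h := hOe (-c) (m - 1) (by linarith) (by linarith)
    have hcb : (u - (m-1) * β + 1) ≤ c * (-α) := by
      rw [← div_le_iff₀ (by linarith : (0:ℝ) < -α)]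
      exact le_max_right _ _
    nlinarith
  have hβpos : 0 < β := by
    rcases lt_or_eq_of_le hβ0 with h | h
    · exact h
    · exfalso
      have h1 := hAe 0
      rw [hg0] at h1
      have h2 := hOe (-1) (m - 1) (by norm_num) (by linarith)
      rw [← h] at h1 h2
      simp at h1 h2
      linarith
  have humβ : m * β ≤ u := by
    by_contra hlt
    push_neg at hlt
    set ε := (m * β - u) / (α + β + 1) with hε
    have hd : (0:ℝ) < α + β + 1 := by linarith
    have hεpos : 0 < ε := div_pos (by linarith) hd
    have h := hOe (-ε) (m - ε) (by linarith) (by linarith)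
    have heq : ε * (α + β + 1) = m * β - u := by
      rw [hε]; field_simp
    nlinarith [hεpos, h, heq]
  refine ⟨α / β, div_nonneg hα0 (le_of_lt hβpos), fun e => ?_⟩
  have h1 : m * β ≤ (f e + α / β * g e) * β := by
    have : (f e + α / β * g e) * β = f e * β + α * g e := by
      field_simp
    rw [this]
    calc m * β ≤ u := humβ
      _ ≤ g e * α + f e * β := hAe e
      _ = f e * β + α * g e := by ring
  exact le_of_mul_le_mul_right (by linarith [h1]) hβpos

end GEN

variable {N : ℕ}

lemma star_sum_elim (e : Fin N → ℂ) (z : Unit → ℂ) :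
    star (Sum.elim e z) = Sum.elim (star e) (star z) := by
  funext x; cases x <;> rfl

lemma block_form (A : Matrix (Fin N) (Fin N) ℂ) (u : Fin N → ℂ)
    (r : Fin N → ℂ) (d : ℂ) (e : Fin N → ℂ) (z : ℂ) :
    star (Sum.elim e (fun _ => z)) ⬝ᵥ
      (Matrix.fromBlocks A (Matrix.of fun k (_ : Unit) => u k)
        (Matrix.of fun (_ : Unit) k => r k)
        (Matrix.of fun (_ : Unit) (_ : Unit) => d)) *ᵥ (Sum.elim e (fun _ => z)) =
      star e ⬝ᵥ A *ᵥ e + z * (star e ⬝ᵥ u) + star z * (r ⬝ᵥ e) + star z * z * d := by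
  rw [star_sum_elim, Matrix.fromBlocks_mulVec]
  simp only [Sum.elim_comp_inl, Sum.elim_comp_inr]
  rw [sumElim_dotProduct_sumElim]
  have h1 : star e ⬝ᵥ (A *ᵥ e + (Matrix.of fun k (_ : Unit) => u k) *ᵥ (fun _ => z)) =
      star e ⬝ᵥ A *ᵥ e + z * (star e ⬝ᵥ u) := by
    rw [dotProduct_add]
    congr 1
    simp only [Matrix.mulVec, dotProduct, Matrix.of_apply, Finset.mul_sum]
    exact Finset.sum_congr rfl (fun _ _ => by simp; ring)
  have h2 : star (fun (_ : Unit) => z) ⬝ᵥ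
      ((Matrix.of fun (_ : Unit) k => r k) *ᵥ e +
        (Matrix.of fun (_ : Unit) (_ : Unit) => d) *ᵥ (fun _ => z)) =
      star z * (r ⬝ᵥ e) + star z * z * d := by
    simp only [Matrix.mulVec, dotProduct, Matrix.of_apply, Pi.star_apply,
      Pi.add_apply]
    simp
    ring
  rw [h1, h2]
  ring

variable {N : ℕ}

-- assume previous lemmas; re-state as axioms for fast iteration? no, just copy later.
section
variable (W B : Matrix (Fin N) (Fin N) ℂ) (h : Fin N → ℂ) (t μ : ℝ)

lemma bracket_eq (e : Fin N → ℂ) :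
    star e ⬝ᵥ (W + (μ:ℂ) • B) *ᵥ e + (star e ⬝ᵥ (W *ᵥ h)) + ((star h ᵥ* W) ⬝ᵥ e) +
      (star h ⬝ᵥ W *ᵥ h - (t:ℂ) - (μ:ℂ)) =
    star (h + e) ⬝ᵥ W *ᵥ (h + e) + (μ:ℂ) * (star e ⬝ᵥ B *ᵥ e) - t - μ := by
  have h1 : star e ⬝ᵥ (W + (μ:ℂ) • B) *ᵥ e =
      star e ⬝ᵥ W *ᵥ e + (μ:ℂ) * (star e ⬝ᵥ B *ᵥ e) := by
    rw [Matrix.add_mulVec, dotProduct_add, Matrix.smul_mulVec,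
      dotProduct_smul, smul_eq_mul]
  have h2 : (star h ᵥ* W) ⬝ᵥ e = star h ⬝ᵥ W *ᵥ e := (Matrix.dotProduct_mulVec _ _ _).symm
  have h3 := quad_expand W h e
  rw [h1, h2]
  rw [h3]
  ring
end

lemma selfstar_nonneg {w : ℂ} (h1 : star w = w) (h2 : 0 ≤ w.re) : 0 ≤ w := by
  rw [Complex.le_def]
  have him : w.im = 0 := by
    have := congrArg Complex.im h1
    simp only [Complex.star_def, Complex.conj_im] at this
    linarith
  exact ⟨by simpa using h2, by simp [him]⟩

lemma starz_mul (z : ℂ) : star z * z = ((Complex.normSq z : ℝ) : ℂ) := by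
  rw [Complex.star_def, mul_comm, Complex.mul_conj]

section PerJ
variable {N : ℕ} (W B : Matrix (Fin N) (Fin N) ℂ) (h : Fin N → ℂ) (t μ : ℝ)

lemma G_selfstar (hWh : W.IsHermitian) (hBh : B.IsHermitian) (e : Fin N → ℂ) :
    star (star (h + e) ⬝ᵥ W *ᵥ (h + e) + (μ:ℂ) * (star e ⬝ᵥ B *ᵥ e) - (t:ℂ) - (μ:ℂ))
      = star (h + e) ⬝ᵥ W *ᵥ (h + e) + (μ:ℂ) * (star e ⬝ᵥ B *ᵥ e) - (t:ℂ) - (μ:ℂ) := by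
  rw [star_sub, star_sub, star_add, star_mul']
  rw [quad_star W hWh, quad_star B hBh]
  simp [Complex.star_def, Complex.conj_ofReal]

lemma G_re (e : Fin N → ℂ) :
    (star (h + e) ⬝ᵥ W *ᵥ (h + e) + (μ:ℂ) * (star e ⬝ᵥ B *ᵥ e) - (t:ℂ) - (μ:ℂ)).re
      = (star (h + e) ⬝ᵥ W *ᵥ (h + e)).re + μ * (star e ⬝ᵥ B *ᵥ e).re - t - μ := by
  simp [Complex.sub_re, Complex.add_re, Complex.re_ofReal_mul]

lemma psd_to_scalar
    (hPSD : (Matrix.fromBlocks (W + (μ : ℂ) • B)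
        (Matrix.of fun k (_ : Unit) => (W *ᵥ h) k)
        (Matrix.of fun (_ : Unit) k => (star h ᵥ* W) k)
        (Matrix.of fun (_ : Unit) (_ : Unit) =>
          star h ⬝ᵥ W *ᵥ h - (t : ℂ) - (μ : ℂ))).PosSemidef)
    (e : Fin N → ℂ) :
    t + μ * (1 - (star e ⬝ᵥ B *ᵥ e).re) ≤ (star (h + e) ⬝ᵥ W *ᵥ (h + e)).re := by
  have h0 := hPSD.dotProduct_mulVec_nonneg (Sum.elim e (fun _ => (1:ℂ)))
  rw [block_form] at h0
  simp only [star_one, one_mul, mul_one] at h0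
  rw [bracket_eq W B h t μ e] at h0
  rw [Complex.le_def] at h0
  have h1 := h0.1
  rw [G_re] at h1
  simp only [Complex.zero_re] at h1
  linarith

lemma scalar_to_psd (hW : W.PosSemidef) (hB : B.PosSemidef) (hμ : 0 ≤ μ)
    (hs : ∀ e, t + μ * (1 - (star e ⬝ᵥ B *ᵥ e).re) ≤ (star (h + e) ⬝ᵥ W *ᵥ (h + e)).re) :
    (Matrix.fromBlocks (W + (μ : ℂ) • B)
        (Matrix.of fun k (_ : Unit) => (W *ᵥ h) k)
        (Matrix.of fun (_ : Unit) k => (star h ᵥ* W) k)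
        (Matrix.of fun (_ : Unit) (_ : Unit) =>
          star h ⬝ᵥ W *ᵥ h - (t : ℂ) - (μ : ℂ))).PosSemidef := by
  have hG : ∀ e, 0 ≤ star (h + e) ⬝ᵥ W *ᵥ (h + e) + (μ:ℂ) * (star e ⬝ᵥ B *ᵥ e)
      - (t:ℂ) - (μ:ℂ) := by
    intro e
    refine selfstar_nonneg (G_selfstar W B h t μ hW.1 hB.1 e) ?_
    rw [G_re]
    have := hs e
    linarith
  have hA : (W + (μ:ℂ) • B).IsHermitian := by
    have hsm : ((μ:ℂ) • B).IsHermitian := by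
      show ((μ:ℂ) • B)ᴴ = (μ:ℂ) • B
      rw [Matrix.conjTranspose_smul, hB.1.eq]
      simp [Complex.star_def, Complex.conj_ofReal]
    exact hW.1.add hsm
  refine Matrix.PosSemidef.of_dotProduct_mulVec_nonneg ?_ ?_
  · rw [Matrix.isHermitian_fromBlocks_iff]
    refine ⟨hA, ?_, ?_, ?_⟩
    · ext k l
      simp only [Matrix.conjTranspose_apply, Matrix.of_apply]
      have := congrFun (Matrix.star_mulVec W h) l
      simp only [Pi.star_apply] at this
      rw [this, hW.1.eq]
    · ext k l
      simp only [Matrix.conjTranspose_apply, Matrix.of_apply]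
      have := congrFun (Matrix.star_vecMul W (star h)) k
      simp only [Pi.star_apply, star_star] at this
      rw [this, hW.1.eq]
    · ext k l
      simp only [Matrix.conjTranspose_apply, Matrix.of_apply]
      rw [star_sub, star_sub, quad_star W hW.1]
      simp [Complex.star_def, Complex.conj_ofReal]
  · intro x
    set z := x (Sum.inr ()) with hz'
    set e := x ∘ Sum.inl with he0
    have hx : x = Sum.elim e (fun _ => z) := by
      funext w; rcases w with k | ⟨⟩ <;> rfl
    rw [hx, block_form]
    by_cases hz : z = 0
    · simp only [hz, star_zero, zero_mul, mul_zero, add_zero]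
      have h1 : star e ⬝ᵥ (W + (μ:ℂ) • B) *ᵥ e =
          star e ⬝ᵥ W *ᵥ e + (μ:ℂ) * (star e ⬝ᵥ B *ᵥ e) := by
        rw [Matrix.add_mulVec, dotProduct_add, Matrix.smul_mulVec,
          dotProduct_smul, smul_eq_mul]
      rw [h1]
      refine add_nonneg (hW.dotProduct_mulVec_nonneg e) ?_
      refine selfstar_nonneg ?_ ?_
      · rw [star_mul', quad_star B hB.1]
        simp [Complex.star_def, Complex.conj_ofReal]
      · rw [Complex.re_ofReal_mul]
        exact mul_nonneg hμ (psd_re_nonneg hB e)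
    · set e' := z⁻¹ • e with he'
      have he : e = z • e' := by
        rw [he', smul_smul, mul_inv_cancel₀ hz, one_smul]
      rw [he]
      have k1 : star (z • e') ⬝ᵥ (W + (μ:ℂ) • B) *ᵥ (z • e') =
          star z * z * (star e' ⬝ᵥ (W + (μ:ℂ) • B) *ᵥ e') := by
        simpa using quad_smul (W + (μ:ℂ) • B) z z e' e'
      have k2 : star (z • e') ⬝ᵥ (W *ᵥ h) = star z * (star e' ⬝ᵥ (W *ᵥ h)) := by
        rw [star_smul, smul_dotProduct, smul_eq_mul]
      have k3 : (star h ᵥ* W) ⬝ᵥ (z • e') = z * ((star h ᵥ* W) ⬝ᵥ e') := by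
        rw [dotProduct_smul, smul_eq_mul]
      rw [k1, k2, k3]
      have hcomb : star z * z * (star e' ⬝ᵥ (W + (μ:ℂ) • B) *ᵥ e') +
          z * (star z * (star e' ⬝ᵥ (W *ᵥ h))) +
          star z * (z * ((star h ᵥ* W) ⬝ᵥ e')) +
          star z * z * (star h ⬝ᵥ W *ᵥ h - (t:ℂ) - (μ:ℂ)) =
          star z * z * (star e' ⬝ᵥ (W + (μ:ℂ) • B) *ᵥ e' + (star e' ⬝ᵥ (W *ᵥ h)) +
            ((star h ᵥ* W) ⬝ᵥ e') + (star h ⬝ᵥ W *ᵥ h - (t:ℂ) - (μ:ℂ))) := by ring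
      rw [hcomb, bracket_eq W B h t μ e']
      rw [starz_mul]
      refine selfstar_nonneg ?_ ?_
      · rw [star_mul', G_selfstar W B h t μ hW.1 hB.1]
        simp [Complex.star_def, Complex.conj_ofReal]
      · rw [Complex.re_ofReal_mul, G_re]
        have := hs e'
        have h2 := Complex.normSq_nonneg z
        nlinarith [hs e', Complex.normSq_nonneg z]
end PerJ

lemma psd2_of (a r d : ℝ) (ha : 0 ≤ a) (hd : 0 ≤ d) (hr : 0 ≤ r) (hrd : r^2 ≤ a*d) :
    (!![a, r; r, d]).PosSemidef := by
  have hs0 := Real.sqrt_nonneg a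
  have hs1 := Real.sqrt_nonneg d
  have ha2 : Real.sqrt a ^ 2 = a := Real.sq_sqrt ha
  have hd2 : Real.sqrt d ^ 2 = d := Real.sq_sqrt hd
  have hrs : r ≤ Real.sqrt a * Real.sqrt d := by
    rw [← Real.sqrt_mul ha d, ← Real.sqrt_sq hr]
    exact Real.sqrt_le_sqrt hrd
  refine Matrix.PosSemidef.of_dotProduct_mulVec_nonneg ?_ ?_
  · ext i j
    fin_cases i <;> fin_cases j <;> simp [Matrix.conjTranspose_apply]
  · intro x
    have hform : star x ⬝ᵥ (!![a, r; r, d]) *ᵥ x =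
        a * x 0 ^ 2 + 2 * r * (x 0 * x 1) + d * x 1 ^ 2 := by
      simp [dotProduct, Matrix.mulVec, Fin.sum_univ_two]
      ring
    rw [hform]
    rcases le_or_gt 0 (x 0 * x 1) with hp | hn
    · nlinarith [mul_nonneg ha (sq_nonneg (x 0)), mul_nonneg hd (sq_nonneg (x 1)),
        mul_nonneg hr hp]
    · have key : r * (-(x 0 * x 1)) ≤ (Real.sqrt a * Real.sqrt d) * (-(x 0 * x 1)) :=
        mul_le_mul_of_nonneg_right hrs (by linarith)
      nlinarith [sq_nonneg (Real.sqrt a * x 0 + Real.sqrt d * x 1), key]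

lemma psd2_to (a r d : ℝ) (hr : 0 ≤ r)
    (hP : (!![a, r; r, d]).PosSemidef) : 0 ≤ a ∧ 0 ≤ d ∧ r^2 ≤ a*d := by
  have hform : ∀ x0 x1 : ℝ, 0 ≤ a * x0 ^ 2 + 2 * r * (x0 * x1) + d * x1 ^ 2 := by
    intro x0 x1
    have := hP.dotProduct_mulVec_nonneg ![x0, x1]
    have hf : star ![x0,x1] ⬝ᵥ (!![a, r; r, d]) *ᵥ ![x0,x1] =
        a * x0 ^ 2 + 2 * r * (x0 * x1) + d * x1 ^ 2 := by
      simp [dotProduct, Matrix.mulVec, Fin.sum_univ_two]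
      ring
    rwa [hf] at this
  have ha : 0 ≤ a := by have := hform 1 0; linarith
  have hd : 0 ≤ d := by have := hform 0 1; linarith
  refine ⟨ha, hd, ?_⟩
  rcases eq_or_lt_of_le ha with h0 | hpos
  · have hr0 : r = 0 := by
      by_contra hne
      have hrpos : 0 < r := lt_of_le_of_ne hr (Ne.symm hne)
      have := hform ((d+1)/(2*r)) (-1)
      rw [← h0] at this
      have harith : 2 * r * ((d+1)/(2*r) * -1) = -(d+1) := by
        field_simp
      nlinarith
    rw [hr0]
    nlinarith [mul_nonneg ha hd]
  · have := hform (-r) a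
    nlinarith

/-- Full LMI reformulation of the worst-case energy-harvesting constraint of one
receiver in the robust beamforming and power-splitting design problem. -/
theorem worst_case_eh_iff_LMIs {N K : ℕ} (i : Fin K)
    (hh : Fin K → (Fin N → ℂ))
    (B : Fin K → Matrix (Fin N) (Fin N) ℂ) (hB : ∀ j, (B j).PosSemidef)
    (W : Fin K → Matrix (Fin N) (Fin N) ℂ) (hW : ∀ j, (W j).PosSemidef)
    (ζ ρ η σ2 : ℝ) (hζ0 : 0 < ζ) (hζ1 : ζ ≤ 1) (hρ0 : 0 ≤ ρ) (hρ1 : ρ ≤ 1)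
    (hη : 0 < η) (hσ2 : 0 < σ2) :
    (∀ e : Fin K → (Fin N → ℂ), (∀ j, (star (e j) ⬝ᵥ (B j) *ᵥ (e j)).re ≤ 1) →
        ζ * (1 - ρ) *
            ((∑ j, (star (hh j + e j) ⬝ᵥ (W j) *ᵥ (hh j + e j)).re) + σ2) ≥ η) ↔
      (∃ μ t : Fin K → ℝ, (∀ j, 0 ≤ μ j ∧ 0 ≤ t j) ∧
        (!![ζ * (1 - ρ), Real.sqrt η; Real.sqrt η, (∑ j, t j) + σ2] :
          Matrix (Fin 2) (Fin 2) ℝ).PosSemidef ∧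
        (∀ j, (Matrix.fromBlocks (W j + (μ j : ℂ) • B j)
            (Matrix.of fun k (_ : Unit) => ((W j) *ᵥ (hh j)) k)
            (Matrix.of fun (_ : Unit) k => (star (hh j) ᵥ* (W j)) k)
            (Matrix.of fun (_ : Unit) (_ : Unit) =>
              star (hh j) ⬝ᵥ (W j) *ᵥ (hh j) - (t j : ℂ) - (μ j : ℂ))).PosSemidef)) := by
  set a := ζ * (1 - ρ) with ha_def
  have ha : 0 ≤ a := mul_nonneg hζ0.le (by linarith)
  set f : Fin K → (Fin N → ℂ) → ℝ :=
    fun j e => (star (hh j + e) ⬝ᵥ (W j) *ᵥ (hh j + e)).re with hf_def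
  set g : Fin K → (Fin N → ℂ) → ℝ :=
    fun j e => (star e ⬝ᵥ (B j) *ᵥ e).re - 1 with hg_def
  have hf0 : ∀ j e, 0 ≤ f j e := fun j e => psd_re_nonneg (hW j) _
  have hg0 : ∀ j, g j 0 = -1 := by
    intro j; simp [hg_def]
  have hr0 : 0 ≤ Real.sqrt η := Real.sqrt_nonneg η
  have hr2 : Real.sqrt η ^ 2 = η := Real.sq_sqrt hη.le
  constructor
  · intro hwc
    have H : ∀ j, ∃ μ : ℝ, 0 ≤ μ ∧
        ∀ e, sInf (f j '' {e | g j e ≤ 0}) ≤ f j e + μ * g j e := by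
      intro j
      refine dual_attain (f j) (g j) ?_ (hf0 j) (hg0 j)
      intro p q hp hq hpq x y
      have hpqc : (p : ℂ) + (q : ℂ) = 1 := by
        push_cast
        exact_mod_cast congrArg (fun r : ℝ => (r : ℂ)) hpq
      constructor
      · have key := quad_convex (hW j) p q hp hq hpq (hh j + x) (hh j + y)
        have hmix : (p:ℂ) • hh j + (q:ℂ) • hh j = hh j := by
          rw [← add_smul, hpqc, one_smul]
        have harg : (p:ℂ) • (hh j + x) + (q:ℂ) • (hh j + y) =
            hh j + ((p:ℂ) • x + (q:ℂ) • y) := by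
          rw [smul_add, smul_add]
          calc (p:ℂ) • hh j + (p:ℂ) • x + ((q:ℂ) • hh j + (q:ℂ) • y)
              = ((p:ℂ) • hh j + (q:ℂ) • hh j) + ((p:ℂ) • x + (q:ℂ) • y) := by abel
            _ = hh j + ((p:ℂ) • x + (q:ℂ) • y) := by rw [hmix]
        rw [harg] at key
        exact key
      · have key := quad_convex (hB j) p q hp hq hpq x y
        simp only [hg_def]
        nlinarith [key]
    choose μ hμ0 hμprop using H
    set t : Fin K → ℝ := fun j => sInf (f j '' {e | g j e ≤ 0}) with ht_def
    have hfeas : ∀ j, (f j '' {e | g j e ≤ 0}).Nonempty := by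
      intro j
      exact ⟨f j 0, 0, by simp [hg0 j], rfl⟩
    have ht0 : ∀ j, 0 ≤ t j := by
      intro j
      exact Real.sInf_nonneg (by rintro y ⟨e, _, rfl⟩; exact hf0 j e)
    have hLMI : ∀ j, (Matrix.fromBlocks (W j + (μ j : ℂ) • B j)
        (Matrix.of fun k (_ : Unit) => ((W j) *ᵥ (hh j)) k)
        (Matrix.of fun (_ : Unit) k => (star (hh j) ᵥ* (W j)) k)
        (Matrix.of fun (_ : Unit) (_ : Unit) =>
          star (hh j) ⬝ᵥ (W j) *ᵥ (hh j) - (t j : ℂ) - (μ j : ℂ))).PosSemidef := by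
      intro j
      refine scalar_to_psd (W j) (B j) (hh j) (t j) (μ j) (hW j) (hB j) (hμ0 j) ?_
      intro e
      have h1 := hμprop j e
      simp only [hg_def] at h1
      have h2 : f j e = (star (hh j + e) ⬝ᵥ (W j) *ᵥ (hh j + e)).re := rfl
      have h3 : t j = sInf (f j '' {e | g j e ≤ 0}) := rfl
      linarith
    -- the 2x2 LMI
    have had : η ≤ a * ((∑ j, t j) + σ2) := by
      by_contra hlt
      push_neg at hlt
      set D := (∑ j, t j) + σ2 with hD_def
      set ε := (η - a * D) / (a * K + 1) with hε_def
      have hden : (0:ℝ) < a * K + 1 := by positivity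
      have hεpos : 0 < ε := div_pos (by linarith) hden
      have hex : ∀ j, ∃ e, g j e ≤ 0 ∧ f j e < t j + ε := by
        intro j
        have hlt2 : sInf (f j '' {e | g j e ≤ 0}) < t j + ε := by
          have h3 : t j = sInf (f j '' {e | g j e ≤ 0}) := rfl
          linarith
        obtain ⟨y, ⟨e, he, rfl⟩, hy⟩ := exists_lt_of_csInf_lt (hfeas j) hlt2
        exact ⟨e, he, hy⟩
      choose ebad hebad1 hebad2 using hex
      have hfeas2 : ∀ j, (star (ebad j) ⬝ᵥ (B j) *ᵥ (ebad j)).re ≤ 1 := by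
        intro j
        have := hebad1 j
        simp only [hg_def] at this
        linarith
      have hsum := hwc ebad hfeas2
      have hrepl : (∑ j, (star (hh j + ebad j) ⬝ᵥ (W j) *ᵥ (hh j + ebad j)).re)
          = ∑ j, f j (ebad j) := Finset.sum_congr rfl (fun j _ => rfl)
      rw [hrepl] at hsum
      have hsumlt : (∑ j, f j (ebad j)) < (∑ j, t j) + K * ε := by
        have : (∑ j, f j (ebad j)) < ∑ j, (t j + ε) :=
          Finset.sum_lt_sum_of_nonempty ⟨i, Finset.mem_univ i⟩ (fun j _ => hebad2 j)
        rw [Finset.sum_add_distrib] at this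
        simp only [Finset.sum_const, Finset.card_univ, Fintype.card_fin, nsmul_eq_mul] at this
        linarith
      have hapos : 0 < a := by
        rcases lt_or_eq_of_le ha with h | h
        · exact h
        · exfalso
          have h0 := hwc ebad hfeas2
          rw [← h] at h0
          simp at h0
          linarith
      have h1 : a * ((∑ j, f j (ebad j)) + σ2) < a * (D + K * ε) := by
        apply mul_lt_mul_of_pos_left _ hapos
        rw [hD_def]; linarith
      have h2 : ε * (a * K + 1) = η - a * D := by
        rw [hε_def, div_mul_cancel₀]
        exact ne_of_gt hden
      nlinarith [hsum, h1, h2, hεpos]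
    refine ⟨μ, t, fun j => ⟨hμ0 j, ht0 j⟩, ?_, hLMI⟩
    refine psd2_of a (Real.sqrt η) ((∑ j, t j) + σ2) ha ?_ hr0 ?_
    · have : (0:ℝ) ≤ ∑ j, t j := Finset.sum_nonneg (fun j _ => ht0 j)
      linarith
    · rw [hr2]; exact had
  · rintro ⟨μ, t, hμt, h2, hLMI⟩ e he
    have hjt : ∀ j, t j ≤ f j (e j) := by
      intro j
      have hs := psd_to_scalar (W j) (B j) (hh j) (t j) (μ j) (hLMI j) (e j)
      have hb1 : (star (e j) ⬝ᵥ (B j) *ᵥ (e j)).re ≤ 1 := he j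
      have hmul : 0 ≤ μ j * (1 - (star (e j) ⬝ᵥ (B j) *ᵥ (e j)).re) :=
        mul_nonneg (hμt j).1 (by linarith)
      simp only [hf_def]
      linarith
    obtain ⟨ha2, hd2, hrd2⟩ := psd2_to a (Real.sqrt η) ((∑ j, t j) + σ2) hr0 h2
    rw [hr2] at hrd2
    have hsum : (∑ j, t j) + σ2 ≤ (∑ j, f j (e j)) + σ2 := by
      have : (∑ j, t j) ≤ ∑ j, f j (e j) := Finset.sum_le_sum (fun j _ => hjt j)
      linarith
    calc η ≤ a * ((∑ j, t j) + σ2) := hrd2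
      _ ≤ a * ((∑ j, f j (e j)) + σ2) := mul_le_mul_of_nonneg_left hsum ha2
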